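/- Let n > 4 and let μ be a permutation of {1,...,n} with μ(1) = 1. Then μ preserves rotation symmetry for cubic MRS functions in n variables if and only if μ(i) = ((i−1)(μ(2)−1) + 1) Mod n for all i with 1 ≤ i ≤ n. -/
import Mathlib


/-- Boolean functions in `n` variables, with variables indexed by `ZMod n`
(index `i : ZMod n` corresponds to the variable `x_{i+1}` in 1-indexed notation,
so that "`a Mod n`" arithmetic on subscripts becomes arithmetic in `ZMod n`). -/
abbrev BF (n : ℕ) := (ZMod n → ZMod 2) → ZMod 2

/-- The cubic MRS function `(1,j,k)` in `n` variables:
`x ↦ Σ_{i=1}^n x_i x_{(i+j-1) Mod n} x_{(i+k-1) Mod n}`, the sum taken in `GF(2)`. -/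
def cubicMRS (n : ℕ) [NeZero n] (j k : ℕ) : BF n :=
  fun x => ∑ i : ZMod n,
    x i * x (i + ((j - 1 : ℕ) : ZMod n)) * x (i + ((k - 1 : ℕ) : ZMod n))

/-- `C_n`: the set of all cubic MRS functions `(1,j,k)`, `1 < j < k ≤ n`, in `n` variables. -/
def cubicSet (n : ℕ) [NeZero n] : Set (BF n) :=
  {f | ∃ j k : ℕ, 1 < j ∧ j < k ∧ k ≤ n ∧ f = cubicMRS n j k}

/-- The set of cubic MRS functions `(1,j,k)` with `1 < j, k ≤ n`, `j ≠ k`. -/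
def cubicSetNe (n : ℕ) [NeZero n] : Set (BF n) :=
  {f | ∃ j k : ℕ, 1 < j ∧ j ≤ n ∧ 1 < k ∧ k ≤ n ∧ j ≠ k ∧ f = cubicMRS n j k}

/-- The action of a permutation `μ` of the variables on a Boolean function:
`(μ·f)(x₁,…,xₙ) = f(x_{μ(1)},…,x_{μ(n)})`. -/
def permAct {n : ℕ} (μ : Equiv.Perm (ZMod n)) (f : BF n) : BF n :=
  fun x => f (fun i => x (μ i))

/-- A Boolean function is rotation symmetric if it is invariant under the cyclic
shift of the variables. -/
def rotSym {n : ℕ} (f : BF n) : Prop :=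
  ∀ x : ZMod n → ZMod 2, f (fun i => x (i + 1)) = f x

/-- A permutation `μ` preserves rotation symmetry (for cubic MRS functions in `n`
variables) if `μ·f` is rotation symmetric for every cubic MRS function `f`. -/
def preservesRS (n : ℕ) [NeZero n] (μ : Equiv.Perm (ZMod n)) : Prop :=
  ∀ f ∈ cubicSetNe n, rotSym (permAct μ f)


section ProofAux

open Finset



lemma triple_eq_cases {α : Type*} [DecidableEq α] {p1 p2 p3 q1 q2 q3 : α}
    (h12 : p1 ≠ p2) (h13 : p1 ≠ p3) (h23 : p2 ≠ p3)
    (h : ({p1, p2, p3} : Finset α) = {q1, q2, q3}) :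
    (p1=q1∧p2=q2∧p3=q3) ∨ (p1=q1∧p2=q3∧p3=q2) ∨ (p1=q2∧p2=q1∧p3=q3) ∨
    (p1=q2∧p2=q3∧p3=q1) ∨ (p1=q3∧p2=q1∧p3=q2) ∨ (p1=q3∧p2=q2∧p3=q1) := by
  have hm : ∀ a : α, (a = p1 ∨ a = p2 ∨ a = p3) ↔ (a = q1 ∨ a = q2 ∨ a = q3) := by
    intro a
    have := Finset.ext_iff.mp h a
    simpa using this
  have h1 := (hm p1).mp (Or.inl rfl)
  have h2 := (hm p2).mp (Or.inr (Or.inl rfl))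
  have h3 := (hm p3).mp (Or.inr (Or.inr rfl))
  rcases h1 with e1|e1|e1 <;> rcases h2 with e2|e2|e2 <;> rcases h3 with e3|e3|e3 <;>
    first
      | exact absurd (e1.trans e2.symm) h12
      | exact absurd (e1.trans e3.symm) h13
      | exact absurd (e2.trans e3.symm) h23
      | tauto

variable {n : ℕ} [NeZero n]

lemma count_odd (μ : Equiv.Perm (ZMod n)) (A B u : ZMod n)
    (hA : A ≠ 0) (hB : B ≠ 0) (hAB : A ≠ B) :
    ¬ 2 ∣ (univ.filter fun i : ZMod n =>
      μ i ∈ ({μ u, μ (u+A), μ (u+B)} : Finset (ZMod n)) ∧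
      μ (i+A) ∈ ({μ u, μ (u+A), μ (u+B)} : Finset (ZMod n)) ∧
      μ (i+B) ∈ ({μ u, μ (u+A), μ (u+B)} : Finset (ZMod n))).card := by
  have hmem : ∀ w : ZMod n,
      (μ w ∈ ({μ u, μ (u+A), μ (u+B)} : Finset (ZMod n))) ↔ (w = u ∨ w = u + A ∨ w = u + B) := by
    intro w
    simp [μ.injective.eq_iff]
  have hfil : (univ.filter fun i : ZMod n =>
      μ i ∈ ({μ u, μ (u+A), μ (u+B)} : Finset (ZMod n)) ∧
      μ (i+A) ∈ ({μ u, μ (u+A), μ (u+B)} : Finset (ZMod n)) ∧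
      μ (i+B) ∈ ({μ u, μ (u+A), μ (u+B)} : Finset (ZMod n)))
      = (univ.filter fun i : ZMod n =>
      (i = u ∨ i = u + A ∨ i = u + B) ∧
      (i+A = u ∨ i+A = u + A ∨ i+A = u + B) ∧
      (i+B = u ∨ i+B = u + A ∨ i+B = u + B)) := by
    apply Finset.filter_congr
    intro i _
    simp only [hmem]
  rw [hfil]
  set P : ZMod n → Prop := fun i =>
      (i = u ∨ i = u + A ∨ i = u + B) ∧
      (i+A = u ∨ i+A = u + A ∨ i+A = u + B) ∧
      (i+B = u ∨ i+B = u + A ∨ i+B = u + B) with hP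
  have hu : u ∈ univ.filter P := by
    simp only [mem_filter, mem_univ, true_and, hP]
    tauto
  by_cases hsing : ∀ i ∈ univ.filter P, i = u
  · have : univ.filter P = {u} := Finset.eq_singleton_iff_unique_mem.mpr ⟨hu, hsing⟩
    rw [this, Finset.card_singleton]
    omega
  · push_neg at hsing
    obtain ⟨i, hiP, hiu⟩ := hsing
    simp only [mem_filter, mem_univ, true_and, hP] at hiP
    obtain ⟨hi0, hi1, hi2⟩ := hiP
    -- distinctness of u, u+A, u+B
    have dA : u + A ≠ u := fun h => hA (by linear_combination h)
    have dB : u + B ≠ u := fun h => hB (by linear_combination h)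
    have dAB : u + A ≠ u + B := fun h => hAB (by linear_combination h)
    have key : (A + A = B ∧ A + B = 0) ∨ (B + B = A ∧ A + B = 0) := by
      rcases hi0 with rfl | rfl | rfl
      · exact absurd rfl hiu
      · left
        constructor
        · rcases hi1 with h | h | h
          · -- A + A = 0
            have h2A : A + A = 0 := by linear_combination h
            rcases hi2 with h' | h' | h'
            · -- A + B = 0, combined with A+A=0 gives A = B, contradiction
              exact absurd (by linear_combination h2A - h') hAB
            · exact absurd (by linear_combination h') hB
            · exact absurd (by linear_combination h') hA
          · exact absurd (by linear_combination h) hA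
          · linear_combination h
        · rcases hi2 with h' | h' | h'
          · linear_combination h'
          · exact absurd (by linear_combination h') hB
          · exact absurd (by linear_combination h') hA
      · right
        constructor
        · rcases hi2 with h | h | h
          · -- B + B = 0
            have h2B : B + B = 0 := by linear_combination h
            rcases hi1 with h' | h' | h'
            · exact absurd (by linear_combination h' - h2B) hAB
            · exact absurd (by linear_combination h') hB
            · exact absurd (by linear_combination h') hA
          · linear_combination h
          · exact absurd (by linear_combination h) hB
        · rcases hi1 with h' | h' | h'
          · linear_combination h'
          · exact absurd (by linear_combination h') hB
          · exact absurd (by linear_combination h') hA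
    have hIU : univ.filter P = {u, u + A, u + B} := by
      ext j
      simp only [mem_filter, mem_univ, true_and, hP, Finset.mem_insert, Finset.mem_singleton]
      constructor
      · exact fun hj => hj.1
      · intro hj
        rcases key with ⟨k1, k2⟩ | ⟨k1, k2⟩
        · rcases hj with rfl | rfl | rfl
          · exact ⟨Or.inl rfl, Or.inr (Or.inl rfl), Or.inr (Or.inr rfl)⟩
          · refine ⟨Or.inr (Or.inl rfl), Or.inr (Or.inr (by linear_combination k1)), Or.inl (by linear_combination k2)⟩
          · refine ⟨Or.inr (Or.inr rfl), Or.inl (by linear_combination k2), Or.inr (Or.inl (by linear_combination k2 - k1))⟩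
        · rcases hj with rfl | rfl | rfl
          · exact ⟨Or.inl rfl, Or.inr (Or.inl rfl), Or.inr (Or.inr rfl)⟩
          · refine ⟨Or.inr (Or.inl rfl), Or.inr (Or.inr (by linear_combination k2 - k1)), Or.inl (by linear_combination k2)⟩
          · refine ⟨Or.inr (Or.inr rfl), Or.inl (by linear_combination k2), Or.inr (Or.inl (by linear_combination k1))⟩
    rw [hIU]
    rw [Finset.card_insert_of_notMem (by simp [dA.symm ∘ Eq.symm, dAB]; tauto),
      Finset.card_insert_of_notMem (by simp [dAB]), Finset.card_singleton]
    omega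

lemma sums_eq (μ : Equiv.Perm (ZMod n)) (hp : preservesRS n μ) {A B : ZMod n}
    (hA : A ≠ 0) (hB : B ≠ 0) (hAB : A ≠ B) (x : ZMod n → ZMod 2) :
    ∑ i : ZMod n, x (μ i + 1) * x (μ (i + A) + 1) * x (μ (i + B) + 1)
      = ∑ i : ZMod n, x (μ i) * x (μ (i + A)) * x (μ (i + B)) := by
  set j : ℕ := A.val + 1 with hj
  set k : ℕ := B.val + 1 with hk
  have hAv : ((j - 1 : ℕ) : ZMod n) = A := by
    simp [hj, ZMod.natCast_zmod_val]
  have hBv : ((k - 1 : ℕ) : ZMod n) = B := by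
    simp [hk, ZMod.natCast_zmod_val]
  have hmem : cubicMRS n j k ∈ cubicSetNe n := by
    refine ⟨j, k, ?_, ?_, ?_, ?_, ?_, rfl⟩
    · have : A.val ≠ 0 := fun h => hA ((ZMod.val_eq_zero A).mp h)
      omega
    · have := ZMod.val_lt A; omega
    · have : B.val ≠ 0 := fun h => hB ((ZMod.val_eq_zero B).mp h)
      omega
    · have := ZMod.val_lt B; omega
    · have : A.val ≠ B.val := fun h => hAB (by
        rw [← ZMod.natCast_zmod_val A, ← ZMod.natCast_zmod_val B, h])
      omega
  have hrs := hp (cubicMRS n j k) hmem x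
  simp only [permAct, cubicMRS, hAv, hBv] at hrs
  exact hrs

lemma htag (μ : Equiv.Perm (ZMod n)) (hp : preservesRS n μ) (σ : ZMod n → ZMod n)
    (hσ : ∀ w, μ (σ w) = μ w + 1) {A B : ZMod n}
    (hA : A ≠ 0) (hB : B ≠ 0) (hAB : A ≠ B) (u : ZMod n) :
    (σ (u+A) - σ u = A ∧ σ (u+B) - σ u = B) ∨
    (σ (u+A) - σ u = -A ∧ σ (u+B) - σ u = B - A) ∨
    (σ (u+A) - σ u = A - B ∧ σ (u+B) - σ u = -B) ∨
    (σ (u+A) - σ u = B ∧ σ (u+B) - σ u = A) ∨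
    (σ (u+A) - σ u = B - A ∧ σ (u+B) - σ u = -A) ∨
    (σ (u+A) - σ u = -B ∧ σ (u+B) - σ u = A - B) := by
  classical
  set S : Finset (ZMod n) := {μ u + 1, μ (u+A) + 1, μ (u+B) + 1} with hS
  have hsum := sums_eq μ hp hA hB hAB (fun t => if t ∈ S then (1 : ZMod 2) else 0)
  have hite : ∀ p q r : ZMod n,
      (if p ∈ S then (1:ZMod 2) else 0) * (if q ∈ S then (1:ZMod 2) else 0) *
        (if r ∈ S then (1:ZMod 2) else 0)
      = if p ∈ S ∧ q ∈ S ∧ r ∈ S then (1:ZMod 2) else 0 := by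
    intro p q r
    by_cases h1 : p ∈ S <;> by_cases h2 : q ∈ S <;> by_cases h3 : r ∈ S <;>
      simp [h1, h2, h3]
  simp only [hite] at hsum
  rw [Finset.sum_boole, Finset.sum_boole] at hsum
  -- left filter equals the count_odd filter
  have hLodd : ¬ 2 ∣ (univ.filter fun i : ZMod n =>
      μ i + 1 ∈ S ∧ μ (i+A) + 1 ∈ S ∧ μ (i+B) + 1 ∈ S).card := by
    have hfe : (univ.filter fun i : ZMod n =>
        μ i + 1 ∈ S ∧ μ (i+A) + 1 ∈ S ∧ μ (i+B) + 1 ∈ S)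
        = (univ.filter fun i : ZMod n =>
        μ i ∈ ({μ u, μ (u+A), μ (u+B)} : Finset (ZMod n)) ∧
        μ (i+A) ∈ ({μ u, μ (u+A), μ (u+B)} : Finset (ZMod n)) ∧
        μ (i+B) ∈ ({μ u, μ (u+A), μ (u+B)} : Finset (ZMod n))) := by
      apply Finset.filter_congr
      intro i _
      have hw : ∀ w : ZMod n, (w + 1 ∈ S) ↔
          (w ∈ ({μ u, μ (u+A), μ (u+B)} : Finset (ZMod n))) := by
        intro w
        simp [hS, add_left_inj]
      simp only [hw]
    rw [hfe]
    exact count_odd μ A B u hA hB hAB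
  have hRne : (univ.filter fun i : ZMod n =>
      μ i ∈ S ∧ μ (i+A) ∈ S ∧ μ (i+B) ∈ S).Nonempty := by
    rw [← Finset.card_pos]
    rcases Nat.eq_zero_or_pos (univ.filter fun i : ZMod n =>
      μ i ∈ S ∧ μ (i+A) ∈ S ∧ μ (i+B) ∈ S).card with h0 | h
    · exfalso
      rw [h0, Nat.cast_zero] at hsum
      exact hLodd ((ZMod.natCast_eq_zero_iff _ 2).mp hsum)
    · exact h
  obtain ⟨i, hi⟩ := hRne
  simp only [mem_filter, mem_univ, true_and] at hi
  obtain ⟨m1, m2, m3⟩ := hi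
  have dpA : μ i ≠ μ (i+A) := fun h => hA (by linear_combination - μ.injective h)
  have dpB : μ i ≠ μ (i+B) := fun h => hB (by linear_combination - μ.injective h)
  have dpAB : μ (i+A) ≠ μ (i+B) := fun h => hAB (by linear_combination μ.injective h)
  have hsub : ({μ i, μ (i+A), μ (i+B)} : Finset (ZMod n)) ⊆ S := by
    intro w hw
    simp only [Finset.mem_insert, Finset.mem_singleton] at hw
    rcases hw with rfl | rfl | rfl <;> assumption
  have hcard3 : ({μ i, μ (i+A), μ (i+B)} : Finset (ZMod n)).card = 3 := by
    rw [Finset.card_insert_of_notMem (by simp [dpA, dpB]),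
      Finset.card_insert_of_notMem (by simp [dpAB]), Finset.card_singleton]
  have hScard : S.card ≤ 3 := by
    refine le_trans (Finset.card_insert_le _ _) ?_
    refine Nat.succ_le_succ ?_
    refine le_trans (Finset.card_insert_le _ _) ?_
    simp
  have htr : ({μ i, μ (i+A), μ (i+B)} : Finset (ZMod n)) = S :=
    Finset.eq_of_subset_of_card_le hsub (by omega)
  have hq1 : μ u + 1 = μ (σ u) := (hσ u).symm
  have hq2 : μ (u+A) + 1 = μ (σ (u+A)) := (hσ (u+A)).symm
  have hq3 : μ (u+B) + 1 = μ (σ (u+B)) := (hσ (u+B)).symm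
  rw [hS, hq1, hq2, hq3] at htr
  rcases triple_eq_cases dpA dpB dpAB htr with
    ⟨e1,e2,e3⟩|⟨e1,e2,e3⟩|⟨e1,e2,e3⟩|⟨e1,e2,e3⟩|⟨e1,e2,e3⟩|⟨e1,e2,e3⟩ <;>
      [skip; skip; skip; skip; skip; skip]
  · have s1 := μ.injective e1; have s2 := μ.injective e2; have s3 := μ.injective e3
    exact Or.inl ⟨by linear_combination s1 - s2, by linear_combination s1 - s3⟩
  · have s1 := μ.injective e1; have s2 := μ.injective e2; have s3 := μ.injective e3
    exact Or.inr (Or.inr (Or.inr (Or.inl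
      ⟨by linear_combination s1 - s3, by linear_combination s1 - s2⟩)))
  · have s1 := μ.injective e1; have s2 := μ.injective e2; have s3 := μ.injective e3
    exact Or.inr (Or.inl ⟨by linear_combination s2 - s1, by linear_combination s2 - s3⟩)
  · have s1 := μ.injective e1; have s2 := μ.injective e2; have s3 := μ.injective e3
    exact Or.inr (Or.inr (Or.inr (Or.inr (Or.inr
      ⟨by linear_combination s3 - s1, by linear_combination s3 - s2⟩))))
  · have s1 := μ.injective e1; have s2 := μ.injective e2; have s3 := μ.injective e3
    exact Or.inr (Or.inr (Or.inr (Or.inr (Or.inl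
      ⟨by linear_combination s2 - s3, by linear_combination s2 - s1⟩))))
  · have s1 := μ.injective e1; have s2 := μ.injective e2; have s3 := μ.injective e3
    exact Or.inr (Or.inr (Or.inl
      ⟨by linear_combination s3 - s2, by linear_combination s3 - s1⟩))


lemma z5_cases : ∀ d e : ZMod 5, e ≠ 0 → d ≠ 0 → d ≠ e → d ≠ -e → (2*d = e ∨ 2*d = -e) := by
  decide

lemma z5_ne : ∀ e : ZMod 5, e ≠ 0 → 2*e ≠ 0 ∧ 3*e ≠ 0 ∧ 4*e ≠ 0 := by decide

lemma z6_final : ∀ d e : ZMod 6,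
    (e≠0 ∧ d≠0 ∧ d≠e ∧ d≠-e ∧ 2*d≠0 ∧ 2*d≠e ∧ 2*d≠-e ∧ 2*e≠0 ∧ d≠2*e ∧ d≠-(2*e)) → False := by
  decide


lemma step1 (hn : 4 < n) (σ : ZMod n → ZMod n) (hinj : Function.Injective σ)
    (H3 : ∀ x y z : ZMod n, x ≠ y → x ≠ z → y ≠ z →
      (σ y - σ x = y - x ∧ σ z - σ x = z - x) ∨
      (σ y - σ x = x - y ∧ σ z - σ x = z - y) ∨
      (σ y - σ x = y - z ∧ σ z - σ x = x - z) ∨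
      (σ y - σ x = z - x ∧ σ z - σ x = y - x) ∨
      (σ y - σ x = z - y ∧ σ z - σ x = x - y) ∨
      (σ y - σ x = x - z ∧ σ z - σ x = y - z)) :
    ∀ x y : ZMod n, σ y - σ x = y - x ∨ σ y - σ x = x - y := by
  intro x y
  by_cases hxy : x = y
  · subst hxy; left; rw [sub_self, sub_self]
  by_contra hcon
  push_neg at hcon
  obtain ⟨hd1, hd2⟩ := hcon
  have hxy' : y ≠ x := fun h => hxy h.symm
  have he0 : y - x ≠ 0 := sub_ne_zero.mpr hxy'
  have hd0 : σ y - σ x ≠ 0 := sub_ne_zero.mpr (fun h => hxy (hinj h).symm)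
  -- slot facts
  have hw1x : y - (σ y - σ x) ≠ x := fun h => hd1 (by linear_combination -h)
  have hw1y : y - (σ y - σ x) ≠ y := fun h => hd0 (by linear_combination -h)
  have hw2x : x + (σ y - σ x) ≠ x := fun h => hd0 (by linear_combination h)
  have hw2y : x + (σ y - σ x) ≠ y := fun h => hd1 (by linear_combination h)
  have hw3y : y + (σ y - σ x) ≠ y := fun h => hd0 (by linear_combination h)
  have hw3x : y + (σ y - σ x) ≠ x := fun h => hd2 (by linear_combination h)
  have hw4x : x - (σ y - σ x) ≠ x := fun h => hd0 (by linear_combination -h)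
  have hw4y : x - (σ y - σ x) ≠ y := fun h => hd2 (by linear_combination -h)
  -- per-z case analysis
  have hz : ∀ z : ZMod n, z ≠ x → z ≠ y →
      (z = y - (σ y - σ x) ∧ σ z = σ x + ((σ y - σ x) - (y - x))) ∨
      (z = x + (σ y - σ x) ∧ σ z = σ x + (y - x)) ∨
      (z = y + (σ y - σ x) ∧ σ z = σ x - (y - x)) ∨
      (z = x - (σ y - σ x) ∧ σ z = σ x + (y - x) + (σ y - σ x)) := by
    intro z hzx hzy
    rcases H3 x y z hxy (fun h => hzx h.symm) (fun h => hzy h.symm) with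
      ⟨c1,c2⟩|⟨c1,c2⟩|⟨c1,c2⟩|⟨c1,c2⟩|⟨c1,c2⟩|⟨c1,c2⟩
    · exact absurd c1 hd1
    · exact absurd c1 hd2
    · exact Or.inl ⟨by linear_combination c1, by linear_combination c2 - c1⟩
    · exact Or.inr (Or.inl ⟨by linear_combination -c1, by linear_combination c2⟩)
    · exact Or.inr (Or.inr (Or.inl ⟨by linear_combination -c1, by linear_combination c2⟩))
    · exact Or.inr (Or.inr (Or.inr ⟨by linear_combination c1, by linear_combination c2 - c1⟩))
  -- coverage
  have hcov : (univ \ ({x, y} : Finset (ZMod n))) ⊆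
      ({y - (σ y - σ x), x + (σ y - σ x), y + (σ y - σ x), x - (σ y - σ x)} :
        Finset (ZMod n)) := by
    intro z hzm
    simp only [mem_sdiff, mem_univ, true_and, Finset.mem_insert, Finset.mem_singleton] at hzm ⊢
    push_neg at hzm
    rcases hz z hzm.1 hzm.2 with ⟨h,_⟩|⟨h,_⟩|⟨h,_⟩|⟨h,_⟩ <;> tauto
  have hcard2 : ({x, y} : Finset (ZMod n)).card = 2 := by
    rw [Finset.card_insert_of_notMem (by simp [hxy]), Finset.card_singleton]
  have hcardsd : (univ \ ({x, y} : Finset (ZMod n))).card = n - 2 := by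
    rw [Finset.card_sdiff_of_subset (Finset.subset_univ _), Finset.card_univ, ZMod.card, hcard2]
  have hcard4 : ({y - (σ y - σ x), x + (σ y - σ x), y + (σ y - σ x), x - (σ y - σ x)} :
      Finset (ZMod n)).card ≤ 4 := by
    refine le_trans (Finset.card_insert_le _ _) (Nat.succ_le_succ ?_)
    refine le_trans (Finset.card_insert_le _ _) (Nat.succ_le_succ ?_)
    refine le_trans (Finset.card_insert_le _ _) (Nat.succ_le_succ ?_)
    simp
  have hn6 : n ≤ 6 := by
    have := Finset.card_le_card hcov
    omega
  -- pinning helper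
  have hpin1 : y - (σ y - σ x) ≠ x + (σ y - σ x) → y - (σ y - σ x) ≠ y + (σ y - σ x) →
      y - (σ y - σ x) ≠ x - (σ y - σ x) → σ (y - (σ y - σ x)) = σ x + ((σ y - σ x) - (y - x)) := by
    intro n2 n3 n4
    rcases hz _ hw1x hw1y with ⟨_,h⟩|⟨h,_⟩|⟨h,_⟩|⟨h,_⟩
    · exact h
    · exact absurd h n2
    · exact absurd h n3
    · exact absurd h n4
  have hpin2 : x + (σ y - σ x) ≠ y - (σ y - σ x) → x + (σ y - σ x) ≠ y + (σ y - σ x) →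
      x + (σ y - σ x) ≠ x - (σ y - σ x) → σ (x + (σ y - σ x)) = σ x + (y - x) := by
    intro n1 n3 n4
    rcases hz _ hw2x hw2y with ⟨h,_⟩|⟨_,h⟩|⟨h,_⟩|⟨h,_⟩
    · exact absurd h n1
    · exact h
    · exact absurd h n3
    · exact absurd h n4
  have hpin3 : y + (σ y - σ x) ≠ y - (σ y - σ x) → y + (σ y - σ x) ≠ x + (σ y - σ x) →
      y + (σ y - σ x) ≠ x - (σ y - σ x) → σ (y + (σ y - σ x)) = σ x - (y - x) := by
    intro n1 n2 n4
    rcases hz _ hw3x hw3y with ⟨h,_⟩|⟨h,_⟩|⟨_,h⟩|⟨h,_⟩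
    · exact absurd h n1
    · exact absurd h n2
    · exact h
    · exact absurd h n4
  have hpin4 : x - (σ y - σ x) ≠ y - (σ y - σ x) → x - (σ y - σ x) ≠ x + (σ y - σ x) →
      x - (σ y - σ x) ≠ y + (σ y - σ x) → σ (x - (σ y - σ x)) = σ x + (y - x) + (σ y - σ x) := by
    intro n1 n2 n3
    rcases hz _ hw4x hw4y with ⟨h,_⟩|⟨h,_⟩|⟨h,_⟩|⟨_,h⟩
    · exact absurd h n1
    · exact absurd h n2
    · exact absurd h n3
    · exact h
  have h5n : n = 5 ∨ n = 6 := by omega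
  rcases h5n with rfl | rfl
  · -- n = 5
    have hne5 := z5_ne _ he0
    rcases z5_cases (σ y - σ x) (y - x) he0 hd0 hd1 (fun h => hd2 (by linear_combination h)) with h2d | h2d
    · -- 2d = e : σ w3 = σ w4 yet w3 ≠ w4
      have h5d : (5 : ZMod 5) * (σ y - σ x) = 0 := by
        rw [show (5 : ZMod 5) = 0 by decide, zero_mul]
      have hw34 : y + (σ y - σ x) ≠ x - (σ y - σ x) := by
        intro h
        exact hne5.1 (by linear_combination h - h2d)
      have hv3 : σ (y + (σ y - σ x)) = σ x - (y - x) := by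
        apply hpin3
        · intro h; exact he0 (by linear_combination h - h2d)
        · intro h; exact he0 (by linear_combination h)
        · exact hw34
      have hv4 : σ (x - (σ y - σ x)) = σ x + (y - x) + (σ y - σ x) := by
        apply hpin4
        · intro h; exact he0 (by linear_combination -h)
        · intro h; exact he0 (by linear_combination -h - h2d)
        · exact fun h => hw34 h.symm
      have : y + (σ y - σ x) = x - (σ y - σ x) := by
        apply hinj
        rw [hv3, hv4]
        linear_combination 2*h2d - h5d
      exact hw34 this
    · -- 2d = -e : σ w1 = σ w2 yet w1 ≠ w2
      have h5d : (5 : ZMod 5) * (σ y - σ x) = 0 := by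
        rw [show (5 : ZMod 5) = 0 by decide, zero_mul]
      have h5e : (5 : ZMod 5) * (y - x) = 0 := by
        rw [show (5 : ZMod 5) = 0 by decide, zero_mul]
      have hw12 : y - (σ y - σ x) ≠ x + (σ y - σ x) := by
        intro h
        exact hne5.1 (by linear_combination h + h2d)
      have hv1 : σ (y - (σ y - σ x)) = σ x + ((σ y - σ x) - (y - x)) := by
        apply hpin1 hw12
        · intro h; exact he0 (by linear_combination h + h2d)
        · intro h; exact he0 (by linear_combination h)
      have hv2 : σ (x + (σ y - σ x)) = σ x + (y - x) := by
        apply hpin2 (fun h => hw12 h.symm)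
        · intro h; exact he0 (by linear_combination -h)
        · intro h; exact he0 (by linear_combination h2d - h)
      have : y - (σ y - σ x) = x + (σ y - σ x) := by
        apply hinj
        rw [hv1, hv2]
        linear_combination 3*h2d - h5d - h5e
      exact hw12 this
  · -- n = 6
    have hcardsd6 : (univ \ ({x, y} : Finset (ZMod 6))).card = 4 := hcardsd
    by_cases h20 : 2 * (σ y - σ x) = 0
    · have hcov2 : (univ \ ({x, y} : Finset (ZMod 6))) ⊆
          ({y - (σ y - σ x), x + (σ y - σ x)} : Finset (ZMod 6)) := by
        intro z hzm
        simp only [mem_sdiff, mem_univ, true_and, Finset.mem_insert,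
          Finset.mem_singleton] at hzm ⊢
        push_neg at hzm
        rcases hz z hzm.1 hzm.2 with ⟨h,_⟩|⟨h,_⟩|⟨h,_⟩|⟨h,_⟩
        · exact Or.inl h
        · exact Or.inr h
        · exact Or.inl (by linear_combination h + h20)
        · exact Or.inr (by linear_combination h - h20)
      have hle := Finset.card_le_card hcov2
      have hb : ({y - (σ y - σ x), x + (σ y - σ x)} : Finset (ZMod 6)).card ≤ 2 :=
        le_trans (Finset.card_insert_le _ _) (by simp)
      omega
    by_cases h2e : 2 * (σ y - σ x) = y - x
    · have hcov3 : (univ \ ({x, y} : Finset (ZMod 6))) ⊆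
          ({y - (σ y - σ x), y + (σ y - σ x), x - (σ y - σ x)} : Finset (ZMod 6)) := by
        intro z hzm
        simp only [mem_sdiff, mem_univ, true_and, Finset.mem_insert,
          Finset.mem_singleton] at hzm ⊢
        push_neg at hzm
        rcases hz z hzm.1 hzm.2 with ⟨h,_⟩|⟨h,_⟩|⟨h,_⟩|⟨h,_⟩
        · exact Or.inl h
        · exact Or.inl (by linear_combination h + h2e)
        · exact Or.inr (Or.inl h)
        · exact Or.inr (Or.inr h)
      have hle := Finset.card_le_card hcov3
      have hb : ({y - (σ y - σ x), y + (σ y - σ x), x - (σ y - σ x)} : Finset (ZMod 6)).card ≤ 3 := by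
        refine le_trans (Finset.card_insert_le _ _) (Nat.succ_le_succ ?_)
        exact le_trans (Finset.card_insert_le _ _) (by simp)
      omega
    by_cases h2me : 2 * (σ y - σ x) = x - y
    · have hcov3 : (univ \ ({x, y} : Finset (ZMod 6))) ⊆
          ({y - (σ y - σ x), x + (σ y - σ x), y + (σ y - σ x)} : Finset (ZMod 6)) := by
        intro z hzm
        simp only [mem_sdiff, mem_univ, true_and, Finset.mem_insert,
          Finset.mem_singleton] at hzm ⊢
        push_neg at hzm
        rcases hz z hzm.1 hzm.2 with ⟨h,_⟩|⟨h,_⟩|⟨h,_⟩|⟨h,_⟩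
        · exact Or.inl h
        · exact Or.inr (Or.inl h)
        · exact Or.inr (Or.inr h)
        · exact Or.inr (Or.inr (by linear_combination h - h2me))
      have hle := Finset.card_le_card hcov3
      have hb : ({y - (σ y - σ x), x + (σ y - σ x), y + (σ y - σ x)} : Finset (ZMod 6)).card ≤ 3 := by
        refine le_trans (Finset.card_insert_le _ _) (Nat.succ_le_succ ?_)
        exact le_trans (Finset.card_insert_le _ _) (by simp)
      omega
    · -- all four slots distinct
      have d12 : y - (σ y - σ x) ≠ x + (σ y - σ x) := fun h => h2e (by linear_combination -h)
      have d13 : y - (σ y - σ x) ≠ y + (σ y - σ x) := fun h => h20 (by linear_combination -h)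
      have d14 : y - (σ y - σ x) ≠ x - (σ y - σ x) := fun h => he0 (by linear_combination h)
      have d23 : x + (σ y - σ x) ≠ y + (σ y - σ x) := fun h => he0 (by linear_combination -h)
      have d24 : x + (σ y - σ x) ≠ x - (σ y - σ x) := fun h => h20 (by linear_combination h)
      have d34 : y + (σ y - σ x) ≠ x - (σ y - σ x) := fun h => h2me (by linear_combination h)
      have hv1 := hpin1 d12 d13 d14
      have hv2 := hpin2 (fun h => d12 h.symm) d23 d24
      have hv3 := hpin3 (fun h => d13 h.symm) (fun h => d23 h.symm) d34
      have hv4 := hpin4 (fun h => d14 h.symm) (fun h => d24 h.symm) (fun h => d34 h.symm)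
      have h2e0 : 2 * (y - x) ≠ 0 := by
        intro h
        apply d14
        apply hinj
        rw [hv1, hv4]
        linear_combination -h
      have hd2e : σ y - σ x ≠ 2 * (y - x) := by
        intro h
        apply d12
        apply hinj
        rw [hv1, hv2]
        linear_combination h
      have hdm2e : σ y - σ x ≠ -(2 * (y - x)) := by
        intro h
        apply d34
        apply hinj
        rw [hv3, hv4]
        linear_combination -h
      exact z6_final (σ y - σ x) (y - x)
        ⟨he0, hd0, hd1, fun h => hd2 (by linear_combination h), h20, h2e,
          fun h => h2me (by linear_combination h), h2e0, hd2e, hdm2e⟩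

lemma z5_refl : ∀ u e : ZMod 5, e ≠ 0 →
    (u = 0 ∨ u - 2*e = 0 ∨ u - 4*e = 0 ∨ u - e = 0 ∨ u + 2*e = 0) := by decide

lemma z6_three : ∀ (e w1 w2 w3 : ZMod 6), w1≠w2 → w1≠w3 → w2≠w3 →
    2*w1 = e → 2*w2 = e → 2*w3 = e → False := by decide

lemma z6_one : ∀ e w : ZMod 6, 3*e ≠ 0 → 2*w ≠ e := by decide

lemma two_torsion_eq {n : ℕ} [NeZero n] {t₁ t₂ : ZMod n} (h₁ : t₁ ≠ 0) (h₂ : t₂ ≠ 0)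
    (e₁ : 2*t₁ = 0) (e₂ : 2*t₂ = 0) : t₁ = t₂ := by
  have l : ∀ t : ZMod n, t ≠ 0 → 2*t = 0 → 2 * t.val = n := by
    intro t ht he
    have hv : ((2 * t.val : ℕ) : ZMod n) = 0 := by
      push_cast [ZMod.natCast_zmod_val]
      linear_combination he
    have hdvd := (ZMod.natCast_eq_zero_iff _ _).mp hv
    have hlt := ZMod.val_lt t
    have hne : t.val ≠ 0 := fun h => ht (by rw [← ZMod.natCast_zmod_val t, h, Nat.cast_zero])
    obtain ⟨k, hk⟩ := hdvd
    have hk2 : n * k < n * 2 := by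
      calc n * k = 2 * t.val := hk.symm
        _ < 2 * n := by omega
        _ = n * 2 := by ring
    have hklt : k < 2 := Nat.lt_of_mul_lt_mul_left hk2
    have hk0' : k = 1 := by
      rcases Nat.eq_zero_or_pos k with rfl | hkp
      · omega
      · omega
    subst hk0'
    omega
  have v₁ := l t₁ h₁ e₁
  have v₂ := l t₂ h₂ e₂
  rw [← ZMod.natCast_zmod_val t₁, ← ZMod.natCast_zmod_val t₂]
  congr 1
  omega


lemma step2 (hn : 4 < n) (σ : ZMod n → ZMod n) (hinj : Function.Injective σ)
    (hfix : ∀ w : ZMod n, σ w ≠ w)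
    (H3 : ∀ x y z : ZMod n, x ≠ y → x ≠ z → y ≠ z →
      (σ y - σ x = y - x ∧ σ z - σ x = z - x) ∨
      (σ y - σ x = x - y ∧ σ z - σ x = z - y) ∨
      (σ y - σ x = y - z ∧ σ z - σ x = x - z) ∨
      (σ y - σ x = z - x ∧ σ z - σ x = y - x) ∨
      (σ y - σ x = z - y ∧ σ z - σ x = x - y) ∨
      (σ y - σ x = x - z ∧ σ z - σ x = y - z))
    (hstep1 : ∀ x y : ZMod n, σ y - σ x = y - x ∨ σ y - σ x = x - y) :
    ∀ x y : ZMod n, σ y - σ x = y - x := by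
  intro x y
  by_cases hxy : x = y
  · subst hxy; rw [sub_self, sub_self]
  rcases hstep1 x y with h | hb
  · exact h
  by_cases h2e : 2 * (y - x) = 0
  · linear_combination hb - h2e
  exfalso
  have hxy' : y ≠ x := fun h => hxy h.symm
  have he0 : y - x ≠ 0 := sub_ne_zero.mpr hxy'
  -- per z: if z avoids x, y, y+(y-x), x-(y-x) then σ z = σ x + (z - y)
  have hz : ∀ z : ZMod n, z ≠ x → z ≠ y → z ≠ y + (y - x) → z ≠ x - (y - x) →
      σ z = σ x + (z - y) := by
    intro z hzx hzy hzA hzB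
    rcases H3 x y z hxy (fun h => hzx h.symm) (fun h => hzy h.symm) with
      ⟨c1,_⟩|⟨_,c2⟩|⟨c1,_⟩|⟨c1,_⟩|⟨c1,_⟩|⟨c1,_⟩
    · exact absurd (by linear_combination hb - c1) h2e
    · linear_combination c2
    · exact absurd (by linear_combination c1 - hb) hzA
    · exact absurd (by linear_combination hb - c1) hzB
    · exact absurd (by linear_combination hb - c1) hzx
    · exact absurd (by linear_combination c1 - hb) hzy
  have hz2 : ∀ z : ZMod n, z ≠ x → z ≠ y → z ≠ y + (y - x) → z ≠ x - (y - x) →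
      2 * (z - x) = y - x := by
    intro z hzx hzy hzA hzB
    have hzv := hz z hzx hzy hzA hzB
    rcases hstep1 x z with ha | hb2
    · exact absurd (by linear_combination hzv - ha) he0
    · linear_combination hb2 - hzv
  -- n ≤ 6
  have hcard4 : ({x, y, y + (y - x), x - (y - x)} : Finset (ZMod n)).card ≤ 4 := by
    refine le_trans (Finset.card_insert_le _ _) (Nat.succ_le_succ ?_)
    refine le_trans (Finset.card_insert_le _ _) (Nat.succ_le_succ ?_)
    refine le_trans (Finset.card_insert_le _ _) (Nat.succ_le_succ ?_)
    simp
  have hn6 : n ≤ 6 := by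
    by_contra h7
    push_neg at h7
    have hc : 2 < (univ \ ({x, y, y + (y - x), x - (y - x)} : Finset (ZMod n))).card := by
      rw [Finset.card_sdiff_of_subset (Finset.subset_univ _), Finset.card_univ, ZMod.card]
      omega
    obtain ⟨a, hma, b, hmb, c, hmc, hab, hac, hbc⟩ := Finset.two_lt_card.mp hc
    simp only [mem_sdiff, mem_univ, true_and, Finset.mem_insert, Finset.mem_singleton] at hma hmb hmc
    push_neg at hma hmb hmc
    have ha2 := hz2 a hma.1 hma.2.1 hma.2.2.1 hma.2.2.2
    have hb2 := hz2 b hmb.1 hmb.2.1 hmb.2.2.1 hmb.2.2.2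
    have hc2 := hz2 c hmc.1 hmc.2.1 hmc.2.2.1 hmc.2.2.2
    have t1 : (2 : ZMod n) * (b - a) = 0 := by linear_combination hb2 - ha2
    have t2 : (2 : ZMod n) * (c - a) = 0 := by linear_combination hc2 - ha2
    have hne1 : b - a ≠ 0 := sub_ne_zero.mpr (fun h => hab h.symm)
    have hne2 : c - a ≠ 0 := sub_ne_zero.mpr (fun h => hac h.symm)
    have := two_torsion_eq hne1 hne2 t1 t2
    exact hbc (by linear_combination this)
  have h5n : n = 5 ∨ n = 6 := by omega
  rcases h5n with rfl | rfl
  · -- n = 5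
    have h3e : 3 * (y - x) ≠ 0 := (z5_ne _ he0).2.1
    have h4e : 4 * (y - x) ≠ 0 := (z5_ne _ he0).2.2
    -- value at z0 = x + 3(y-x)
    have hvz0 : σ (x + 3*(y - x)) = σ x + ((x + 3*(y - x)) - y) := by
      apply hz
      · intro h; exact h3e (by linear_combination h)
      · intro h; exact h2e (by linear_combination h)
      · intro h; exact he0 (by linear_combination h)
      · intro h; exact h4e (by linear_combination h)
    -- value at zA = y + (y-x)
    have hA : σ (y + (y - x)) = σ x + (y - x) ∨ σ (y + (y - x)) = σ x - 2*(y - x) := by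
      rcases H3 x y (y + (y - x)) hxy
          (fun h => h2e (by linear_combination -h)) (fun h => he0 (by linear_combination -h)) with
        ⟨c1,_⟩|⟨_,c2⟩|⟨_,c2⟩|⟨c1,_⟩|⟨c1,_⟩|⟨c1,_⟩
      · exact absurd (by linear_combination hb - c1) h2e
      · left; linear_combination c2
      · right; linear_combination c2
      · exact absurd (by linear_combination hb - c1) h3e
      · exact absurd (by linear_combination hb - c1) h2e
      · exact absurd (by linear_combination c1 - hb) he0
    -- value at zB = x - (y-x)
    have hBv : σ (x - (y - x)) = σ x - 2*(y - x) ∨ σ (x - (y - x)) = σ x + (y - x) := by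
      rcases H3 x y (x - (y - x)) hxy
          (fun h => he0 (by linear_combination h)) (fun h => h2e (by linear_combination h)) with
        ⟨c1,_⟩|⟨_,c2⟩|⟨c1,_⟩|⟨_,c2⟩|⟨c1,_⟩|⟨c1,_⟩
      · exact absurd (by linear_combination hb - c1) h2e
      · left; linear_combination c2
      · exact absurd (by linear_combination hb - c1) h3e
      · right; linear_combination c2
      · exact absurd (by linear_combination c1 - hb) he0
      · exact absurd (by linear_combination hb - c1) h2e
    have hABne : y + (y - x) ≠ x - (y - x) := fun h => h3e (by linear_combination h)
    rcases hA with hvA | hvA <;> rcases hBv with hvB | hvB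
    · -- genuine case (i,i): refute via triple (y, zA, z0)
      rcases H3 y (y + (y - x)) (x + 3*(y - x))
          (fun h => he0 (by linear_combination -h))
          (fun h => h2e (by linear_combination -h))
          (fun h => he0 (by linear_combination -h)) with
        ⟨c1,_⟩|⟨c1,_⟩|⟨c1,_⟩|⟨_,c2⟩|⟨c1,_⟩|⟨c1,_⟩
      · exact he0 (by linear_combination c1 + hb - hvA)
      · exact h3e (by linear_combination c1 + hb - hvA)
      · exact h3e (by linear_combination c1 + hb - hvA)
      · exact h2e (by linear_combination c2 + hb - hvz0)
      · exact he0 (by linear_combination c1 + hb - hvA)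
      · exact h4e (by linear_combination c1 + hb - hvA)
    · exact hABne (hinj (hvA.trans hvB.symm))
    · exact hABne (hinj (hvA.trans hvB.symm))
    · -- reflection case: σ has a fixed point
      rcases z5_refl (σ x - x) (y - x) he0 with h | h | h | h | h
      · exact hfix x (by linear_combination h)
      · exact hfix y (by linear_combination hb + h)
      · exact hfix (y + (y - x)) (by linear_combination hvA + h)
      · exact hfix (x + 3*(y - x)) (by linear_combination hvz0 + h)
      · exact hfix (x - (y - x)) (by linear_combination hvB + h)
  · -- n = 6
    by_cases h3e : 3 * (y - x) = 0
    · have hcard3 : ({x, x + (y - x), x + 2*(y - x)} : Finset (ZMod 6)).card ≤ 3 := by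
        refine le_trans (Finset.card_insert_le _ _) (Nat.succ_le_succ ?_)
        exact le_trans (Finset.card_insert_le _ _) (by simp)
      have hc : 2 < (univ \ ({x, x + (y - x), x + 2*(y - x)} : Finset (ZMod 6))).card := by
        rw [Finset.card_sdiff_of_subset (Finset.subset_univ _), Finset.card_univ, ZMod.card]
        omega
      obtain ⟨a, hma, b, hmb, c, hmc, hab, hac, hbc⟩ := Finset.two_lt_card.mp hc
      simp only [mem_sdiff, mem_univ, true_and, Finset.mem_insert, Finset.mem_singleton]
        at hma hmb hmc
      push_neg at hma hmb hmc
      have key : ∀ w : ZMod 6, w ≠ x → w ≠ x + (y - x) → w ≠ x + 2*(y - x) →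
          2 * (w - x) = y - x := by
        intro w k1 k2 k3
        apply hz2 w k1
        · intro h; exact k2 (by linear_combination h)
        · intro h; exact k3 (by linear_combination h)
        · intro h; exact k3 (by linear_combination h - h3e)
      have ha2 := key a hma.1 hma.2.1 hma.2.2
      have hb2 := key b hmb.1 hmb.2.1 hmb.2.2
      have hc2 := key c hmc.1 hmc.2.1 hmc.2.2
      exact z6_three (y - x) (a - x) (b - x) (c - x)
        (fun h => hab (by linear_combination h))
        (fun h => hac (by linear_combination h))
        (fun h => hbc (by linear_combination h)) ha2 hb2 hc2
    · have hc : 0 < (univ \ ({x, y, y + (y - x), x - (y - x)} : Finset (ZMod 6))).card := by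
        rw [Finset.card_sdiff_of_subset (Finset.subset_univ _), Finset.card_univ, ZMod.card]
        omega
      obtain ⟨z, hmz⟩ := Finset.card_pos.mp hc
      simp only [mem_sdiff, mem_univ, true_and, Finset.mem_insert, Finset.mem_singleton] at hmz
      push_neg at hmz
      exact z6_one (y - x) (z - x) h3e (hz2 z hmz.1 hmz.2.1 hmz.2.2.1 hmz.2.2.2)

end ProofAux

/-- A permutation `μ` of the variables with `μ(1) = 1` (in 0-indexed coordinates,
`μ 0 = 0`) preserves rotation symmetry for cubic MRS functions in `n > 4` variables
if and only if `μ(i) = ((i-1)(μ(2)-1) + 1) Mod n` for all `i`; in 0-indexed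
coordinates, `μ i = μ 1 * i` in `ZMod n`. -/
theorem preservesRS_iff_linear (n : ℕ) [NeZero n] (hn : 4 < n)
    (μ : Equiv.Perm (ZMod n)) (h1 : μ 0 = 0) :
    preservesRS n μ ↔ ∀ i : ZMod n, μ i = μ 1 * i := by
  constructor
  · intro hp
    haveI : Fact (1 < n) := ⟨by omega⟩
    set σ : ZMod n → ZMod n := fun w => μ.symm (μ w + 1) with hσdef
    have hσ : ∀ w, μ (σ w) = μ w + 1 := fun w => μ.apply_symm_apply _
    have hinj : Function.Injective σ := by
      intro a b h
      have h' : μ a + 1 = μ b + 1 := μ.symm.injective h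
      exact μ.injective (by linear_combination h')
    have hfix : ∀ w : ZMod n, σ w ≠ w := by
      intro w h
      have : μ w + 1 = μ w := by rw [← hσ, h]
      exact one_ne_zero (by linear_combination this)
    have H3 : ∀ x y z : ZMod n, x ≠ y → x ≠ z → y ≠ z →
        (σ y - σ x = y - x ∧ σ z - σ x = z - x) ∨
        (σ y - σ x = x - y ∧ σ z - σ x = z - y) ∨
        (σ y - σ x = y - z ∧ σ z - σ x = x - z) ∨
        (σ y - σ x = z - x ∧ σ z - σ x = y - x) ∨
        (σ y - σ x = z - y ∧ σ z - σ x = x - y) ∨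
        (σ y - σ x = x - z ∧ σ z - σ x = y - z) := by
      intro x y z hxy hxz hyz
      have ht := htag μ hp σ hσ (A := y - x) (B := z - x)
        (sub_ne_zero.mpr (fun h => hxy h.symm)) (sub_ne_zero.mpr (fun h => hxz h.symm))
        (fun h => hyz (by linear_combination h)) x
      rw [show x + (y - x) = y by ring, show x + (z - x) = z by ring] at ht
      rcases ht with ⟨c1,c2⟩|⟨c1,c2⟩|⟨c1,c2⟩|⟨c1,c2⟩|⟨c1,c2⟩|⟨c1,c2⟩
      · exact Or.inl ⟨by linear_combination c1, by linear_combination c2⟩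
      · exact Or.inr (Or.inl ⟨by linear_combination c1, by linear_combination c2⟩)
      · exact Or.inr (Or.inr (Or.inl ⟨by linear_combination c1, by linear_combination c2⟩))
      · exact Or.inr (Or.inr (Or.inr (Or.inl
          ⟨by linear_combination c1, by linear_combination c2⟩)))
      · exact Or.inr (Or.inr (Or.inr (Or.inr (Or.inl
          ⟨by linear_combination c1, by linear_combination c2⟩))))
      · exact Or.inr (Or.inr (Or.inr (Or.inr (Or.inr
          ⟨by linear_combination c1, by linear_combination c2⟩))))
    have hs1 := step1 hn σ hinj H3
    have hs2 := step2 hn σ hinj hfix H3 hs1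
    set c : ZMod n := σ 0 with hc
    have hσw : ∀ w : ZMod n, σ w = w + c := by
      intro w
      have := hs2 0 w
      rw [sub_zero] at this
      linear_combination this
    have hcadd : ∀ w : ZMod n, μ (w + c) = μ w + 1 := by
      intro w
      rw [← hσw w, hσ w]
    have hk : ∀ m : ℕ, μ ((m : ZMod n) * c) = (m : ZMod n) := by
      intro m
      induction m with
      | zero => simpa using h1
      | succ m ih =>
          have h' : ((m + 1 : ℕ) : ZMod n) * c = (m : ZMod n) * c + c := by
            push_cast
            ring
          rw [h', hcadd, ih]
          push_cast
          ring
    have hkz : ∀ k : ZMod n, μ (k * c) = k := by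
      intro k
      have := hk k.val
      rwa [ZMod.natCast_zmod_val] at this
    have hinjc : Function.Injective (fun k : ZMod n => k * c) := by
      intro a b h
      have h2 : a * c = b * c := h
      have : μ (a * c) = μ (b * c) := congrArg μ h2
      rwa [hkz, hkz] at this
    obtain ⟨q, hq⟩ := Finite.injective_iff_surjective.mp hinjc 1
    simp only at hq
    have h1q : μ 1 = q := by rw [← hq, hkz]
    intro i
    have hi : (i * q) * c = i := by rw [mul_assoc, hq, mul_one]
    calc μ i = μ ((i * q) * c) := by rw [hi]
      _ = i * q := hkz _
      _ = μ 1 * i := by rw [h1q]; ring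
  · intro hlin f hf x
    obtain ⟨j, k, hj1, hjn, hk1, hkn, hjk, rfl⟩ := hf
    obtain ⟨p, hp⟩ := μ.surjective 1
    have hqp : μ 1 * p = 1 := by rw [← hlin p, hp]
    simp only [permAct, cubicMRS]
    apply Fintype.sum_equiv (Equiv.addRight p)
    intro i
    have e1 : μ (i + p) = μ i + 1 := by
      rw [hlin (i + p), hlin i]
      linear_combination hqp
    have e2 : μ (i + p + ((j - 1 : ℕ) : ZMod n)) = μ (i + ((j - 1 : ℕ) : ZMod n)) + 1 := by
      rw [hlin (i + p + ((j - 1 : ℕ) : ZMod n)), hlin (i + ((j - 1 : ℕ) : ZMod n))]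
      linear_combination hqp
    have e3 : μ (i + p + ((k - 1 : ℕ) : ZMod n)) = μ (i + ((k - 1 : ℕ) : ZMod n)) + 1 := by
      rw [hlin (i + p + ((k - 1 : ℕ) : ZMod n)), hlin (i + ((k - 1 : ℕ) : ZMod n))]
      linear_combination hqp
    simp only [Equiv.coe_addRight]
    rw [e1, e2, e3]
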